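/- arXiv:2511.08400 — 6 statements merged into one kernel-verified Lean document; each statement's English description precedes it below -/
import Mathlib

section
/- There do not exist positive integers x, y, u, v such that x² + y² = u² and x² − y² = v² simultaneously. -/
private lemma sq_mod4 (t : ℤ) : t ^ 2 % 4 = 0 ∧ t % 2 = 0 ∨ t ^ 2 % 4 = 1 ∧ t % 2 = 1 := by
  rcases Int.even_or_odd t with ⟨k, hk⟩ | ⟨k, hk⟩
  · left
    have h1 : t ^ 2 = 4 * k ^ 2 := by rw [hk]; ring
    constructor <;> omega
  · right
    have h1 : t ^ 2 = 4 * (k ^ 2 + k) + 1 := by rw [hk]; ring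
    constructor <;> omega

/-- Descent step for the equation `x ^ 2 = 4 * a ^ 4 + b ^ 4`. -/
private lemma aux2 {x a b : ℤ} (hx : 0 < x) (ha : a ≠ 0) (hb : b ≠ 0)
    (hxodd : x % 2 = 1) (hbodd : b % 2 = 1) (hcop : IsCoprime x b)
    (h : x ^ 2 = 4 * a ^ 4 + b ^ 4)
    (IH : ∀ X Y Z : ℤ, X.natAbs < x.natAbs → X ≠ 0 → Y ≠ 0 → Z ≠ 0 →
      Int.gcd X Y = 1 → X ^ 4 = Y ^ 4 + Z ^ 2 → False) : False := by
  have hb2odd : b ^ 2 % 4 = 1 := by rcases sq_mod4 b with ⟨_, h2⟩ | ⟨h1, _⟩ <;> omega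
  have ha4pos : 0 < a ^ 4 := by positivity
  have hb2nn : 0 ≤ b ^ 2 := sq_nonneg b
  have hb2x : b ^ 2 < x := by nlinarith [sq_nonneg (x + b ^ 2), sq_nonneg (x - b ^ 2)]
  obtain ⟨k, hk⟩ : ∃ k, b ^ 2 = 2 * k + 1 := ⟨b ^ 2 / 2, by omega⟩
  obtain ⟨l, hl⟩ : ∃ l, x = 2 * l + 1 := ⟨x / 2, by omega⟩
  obtain ⟨p, hp⟩ : ∃ p, x - b ^ 2 = 2 * p := ⟨l - k, by omega⟩
  obtain ⟨q, hq⟩ : ∃ q, x + b ^ 2 = 2 * q := ⟨l + k + 1, by omega⟩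
  have hpq : p * q = (a ^ 2) ^ 2 := by
    have h4 : 4 * (p * q) = 4 * ((a ^ 2) ^ 2) := by
      linear_combination (-2 * q) * hp + (-(x - b ^ 2)) * hq + h
    linarith
  have hppos : 0 < p := by omega
  have hqpos : 0 < q := by omega
  have hqp : q = p + b ^ 2 := by omega
  -- p and q are coprime
  have hcop2 : IsCoprime x (b ^ 2) := hcop.pow_right
  obtain ⟨u, v, huv⟩ := hcop2
  have hcoppq : IsCoprime p q := by
    refine ⟨u - v, u + v, ?_⟩
    have hx' : x = p + q := by omega
    have hb2 : b ^ 2 = q - p := by omega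
    linear_combination huv - u * hx' - v * hb2
  have hgcdpq : Int.gcd p q = 1 := Int.isCoprime_iff_gcd_eq_one.mp hcoppq
  obtain ⟨c, hc⟩ := Int.sq_of_gcd_eq_one hgcdpq hpq
  have hc : p = c ^ 2 := by
    rcases hc with hc | hc
    · exact hc
    · exfalso; linarith [sq_nonneg c]
  obtain ⟨d, hd⟩ := Int.sq_of_gcd_eq_one (by rwa [Int.gcd_comm]) (by rwa [mul_comm] at hpq)
  have hd : q = d ^ 2 := by
    rcases hd with hd | hd
    · exact hd
    · exfalso; linarith [sq_nonneg d]
  set C := |c| with hC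
  set D := |d| with hD
  have hpC : p = C ^ 2 := by rw [hC, sq_abs]; exact hc
  have hqD : q = D ^ 2 := by rw [hD, sq_abs]; exact hd
  have hCnn : 0 ≤ C := abs_nonneg c
  have hDnn : 0 ≤ D := abs_nonneg d
  have hCD : C * D = a ^ 2 := by
    have h0 : (C * D - a ^ 2) * (C * D + a ^ 2) = 0 := by
      have hsq : (C * D) ^ 2 = (a ^ 2) ^ 2 := by
        rw [mul_pow, ← hpC, ← hqD]; exact hpq
      linear_combination hsq
    rcases mul_eq_zero.mp h0 with h1 | h1
    · linarith
    · exfalso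
      have h2 : 0 < a ^ 2 := by positivity
      have h3 : 0 ≤ C * D := mul_nonneg hCnn hDnn
      linarith
  have hcopCD : IsCoprime C D := by
    have h1 : IsCoprime (C ^ 2) (D ^ 2) := by rw [← hpC, ← hqD]; exact hcoppq
    exact (IsCoprime.pow_left_iff (by norm_num)).mp
      ((IsCoprime.pow_right_iff (by norm_num)).mp h1)
  have hgcdCD : Int.gcd C D = 1 := Int.isCoprime_iff_gcd_eq_one.mp hcopCD
  obtain ⟨e, he⟩ := Int.sq_of_gcd_eq_one hgcdCD (by rw [hCD])
  have he : C = e ^ 2 := by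
    rcases he with he | he
    · exact he
    · exfalso
      have hC0 : 0 < C := by
        rcases lt_or_eq_of_le hCnn with h1 | h1
        · exact h1
        · exfalso; rw [← h1] at hpC; simp at hpC; omega
      linarith [sq_nonneg e]
  obtain ⟨f, hf⟩ := Int.sq_of_gcd_eq_one (by rwa [Int.gcd_comm]) (by rw [mul_comm, hCD])
  have hf : D = f ^ 2 := by
    rcases hf with hf | hf
    · exact hf
    · exfalso
      have hD0 : 0 < D := by
        rcases lt_or_eq_of_le hDnn with h1 | h1
        · exact h1
        · exfalso; rw [← h1] at hqD; simp at hqD; omega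
      linarith [sq_nonneg f]
  have hpe : p = e ^ 4 := by rw [hpC, he]; ring
  have hqf : q = f ^ 4 := by rw [hqD, hf]; ring
  have hfeq : f ^ 4 = e ^ 4 + b ^ 2 := by omega
  have hf0 : f ≠ 0 := by intro h0; rw [h0] at hqf; simp at hqf; omega
  have he0 : e ≠ 0 := by intro h0; rw [h0] at hpe; simp at hpe; omega
  have hgcdfe : Int.gcd f e = 1 := by
    apply Int.isCoprime_iff_gcd_eq_one.mp
    have h1 : IsCoprime (e ^ 2) (f ^ 2) := by rw [← he, ← hf]; exact hcopCD
    exact ((IsCoprime.pow_left_iff (by norm_num)).mp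
      ((IsCoprime.pow_right_iff (by norm_num)).mp h1)).symm
  have hf4x : f ^ 4 < x := by omega
  have hmeas : f.natAbs < x.natAbs := by
    have h1 : f.natAbs ≤ f.natAbs ^ 4 := Nat.le_self_pow (by norm_num) _
    have h2 : (f ^ 4).natAbs < x.natAbs :=
      Int.natAbs_lt_natAbs_of_nonneg_of_lt (by positivity) hf4x
    rw [Int.natAbs_pow] at h2
    omega
  exact IH f e b hmeas hf0 he0 hb hgcdfe hfeq

/-- No nontrivial coprime solutions of `x ^ 4 = y ^ 4 + z ^ 2`. -/
private lemma no_descent : ∀ n : ℕ, ∀ x y z : ℤ, x.natAbs = n → x ≠ 0 → y ≠ 0 → z ≠ 0 →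
    Int.gcd x y = 1 → x ^ 4 = y ^ 4 + z ^ 2 → False := by
  intro n
  induction n using Nat.strong_induction_on with
  | _ n IH =>
  -- WLOG all positive
  suffices H : ∀ x y z : ℤ, x.natAbs = n → 0 < x → 0 < y → 0 < z →
      Int.gcd x y = 1 → x ^ 4 = y ^ 4 + z ^ 2 → False by
    intro x y z hxn hx hy hz hcop h
    apply H |x| |y| |z|
    · rw [Int.natAbs_abs]; exact hxn
    · exact abs_pos.mpr hx
    · exact abs_pos.mpr hy
    · exact abs_pos.mpr hz
    · rw [Int.gcd, Int.natAbs_abs, Int.natAbs_abs]; exact hcop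
    · rw [Even.pow_abs (by decide), Even.pow_abs (by decide), Even.pow_abs (by decide)]
      exact h
  intro x y z hxn hx hy hz hcop h
  have IH' : ∀ X Y Z : ℤ, X.natAbs < x.natAbs → X ≠ 0 → Y ≠ 0 → Z ≠ 0 →
      Int.gcd X Y = 1 → X ^ 4 = Y ^ 4 + Z ^ 2 → False := by
    intro X Y Z hlt
    exact IH X.natAbs (hxn ▸ hlt) X Y Z rfl
  have hxy : IsCoprime x y := Int.isCoprime_iff_gcd_eq_one.mpr hcop
  have hx2 := sq_mod4 x
  have hy2 := sq_mod4 y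
  have hz2 := sq_mod4 z
  have hx4 := sq_mod4 (x ^ 2)
  have hy4 := sq_mod4 (y ^ 2)
  have hx4' : (x ^ 2) ^ 2 = x ^ 4 := by ring
  have hy4' : (y ^ 2) ^ 2 = y ^ 4 := by ring
  rw [hx4'] at hx4
  rw [hy4'] at hy4
  -- x is odd
  have hxodd : x % 2 = 1 := by
    rcases Int.emod_two_eq_zero_or_one x with hxe | hxe
    · exfalso
      have hyodd : y % 2 = 1 := by
        rcases Int.emod_two_eq_zero_or_one y with hye | hye
        · exfalso
          have h2 : (2 : ℤ) ∣ x := Int.dvd_of_emod_eq_zero hxe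
          have h2' : (2 : ℤ) ∣ y := Int.dvd_of_emod_eq_zero hye
          have h3 : (2 : ℤ) ∣ (Int.gcd x y : ℤ) := Int.dvd_coe_gcd h2 h2'
          rw [hcop] at h3
          norm_num at h3
        · exact hye
      omega
    · exact hxe
  -- y^2 and z are coprime
  have hyz2 : IsCoprime (y ^ 2) (z ^ 2) := by
    have h1 : IsCoprime (y ^ 2) (x ^ 4) := IsCoprime.pow hxy.symm
    have h2 := h1.add_mul_left_right (-(y ^ 2))
    have h3 : x ^ 4 + y ^ 2 * -(y ^ 2) = z ^ 2 := by linear_combination h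
    rwa [h3] at h2
  have hyz : IsCoprime (y ^ 2) z := (IsCoprime.pow_right_iff (by norm_num)).mp hyz2
  rcases Int.emod_two_eq_zero_or_one y with hye | hyo
  · -- Case B : y even, z odd
    have hzodd : z % 2 = 1 := by omega
    have ht : PythagoreanTriple z (y ^ 2) (x ^ 2) := by
      unfold PythagoreanTriple
      linear_combination -h
    have hgcd : Int.gcd z (y ^ 2) = 1 := Int.isCoprime_iff_gcd_eq_one.mp hyz.symm
    obtain ⟨m, nn, e1, e2, e3, e4, e5, e6⟩ :=
      ht.coprime_classification' hgcd hzodd (by positivity)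
    have hmn : IsCoprime m nn := Int.isCoprime_iff_gcd_eq_one.mpr e4
    have hy2pos : 0 < y ^ 2 := by positivity
    have hmpos : 0 < m := by
      rcases lt_or_eq_of_le e6 with h1 | h1
      · exact h1
      · exfalso
        rw [← h1] at e2
        have h2 : y ^ 2 = 0 := by linarith [e2]
        nlinarith [h2]
    have hnpos : 0 < nn := by nlinarith [e2]
    -- x is coprime to m and to nn
    have hxm : IsCoprime m x := by
      have h1 : IsCoprime m (nn ^ 2) := hmn.pow_right
      have h2 := h1.add_mul_left_right m
      have h3 : nn ^ 2 + m * m = x ^ 2 := by linear_combination -e3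
      rw [h3] at h2
      exact (IsCoprime.pow_right_iff (by norm_num : (0:ℕ) < 2)).mp h2
    have hxn : IsCoprime nn x := by
      have h1 : IsCoprime nn (m ^ 2) := hmn.symm.pow_right
      have h2 := h1.add_mul_left_right nn
      have h3 : m ^ 2 + nn * nn = x ^ 2 := by linear_combination -e3
      rw [h3] at h2
      exact (IsCoprime.pow_right_iff (by norm_num : (0:ℕ) < 2)).mp h2
    obtain ⟨y', hy'⟩ : ∃ y', y = 2 * y' := ⟨y / 2, by omega⟩
    rcases e5 with ⟨hme, hno⟩ | ⟨hmo, hne⟩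
    · -- m even, nn odd
      obtain ⟨m', hm'⟩ : ∃ m', m = 2 * m' := ⟨m / 2, by omega⟩
      have hprod : m' * nn = y' ^ 2 := by
        have h4 : 4 * (m' * nn) = 4 * (y' ^ 2) := by
          linear_combination -e2 + (y + 2 * y') * hy' + (-2 * nn) * hm'
        linarith
      have hcopm'n : Int.gcd m' nn = 1 := by
        apply Int.isCoprime_iff_gcd_eq_one.mp
        have h1 : IsCoprime (2 * m') nn := by rw [← hm']; exact hmn
        exact IsCoprime.of_mul_left_right h1
      obtain ⟨A, hA⟩ := Int.sq_of_gcd_eq_one hcopm'n hprod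
      have hA : m' = A ^ 2 := by
        rcases hA with hA | hA
        · exact hA
        · exfalso; have : 0 < m' := by omega
          linarith [sq_nonneg A]
      obtain ⟨B, hB⟩ := Int.sq_of_gcd_eq_one (by rwa [Int.gcd_comm])
        (by rwa [mul_comm] at hprod)
      have hB : nn = B ^ 2 := by
        rcases hB with hB | hB
        · exact hB
        · exfalso; linarith [sq_nonneg B]
      have hA0 : A ≠ 0 := by intro h0; rw [h0] at hA; simp at hA; omega
      have hB0 : B ≠ 0 := by intro h0; rw [h0] at hB; simp at hB; omega
      have hBodd : B % 2 = 1 := by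
        rcases sq_mod4 B with ⟨h1, h2⟩ | ⟨h1, h2⟩
        · exfalso; rw [← hB] at h1; omega
        · exact h2
      have heq2 : x ^ 2 = 4 * A ^ 4 + B ^ 4 := by
        have h5 : x ^ 2 = m ^ 2 + nn ^ 2 := e3
        rw [h5, hm', hA, hB]; ring
      have hcopxB : IsCoprime x B := by
        have h1 : IsCoprime (B ^ 2) x := by rw [← hB]; exact hxn
        exact ((IsCoprime.pow_left_iff (by norm_num : (0:ℕ) < 2)).mp h1).symm
      exact aux2 hx hA0 hB0 hxodd hBodd hcopxB heq2 IH'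
    · -- m odd, nn even
      obtain ⟨n', hn'⟩ : ∃ n', nn = 2 * n' := ⟨nn / 2, by omega⟩
      have hprod : m * n' = y' ^ 2 := by
        have h4 : 4 * (m * n') = 4 * (y' ^ 2) := by
          linear_combination -e2 + (y + 2 * y') * hy' + (-2 * m) * hn'
        linarith
      have hcopmn' : Int.gcd m n' = 1 := by
        apply Int.isCoprime_iff_gcd_eq_one.mp
        have h1 : IsCoprime m (2 * n') := by rw [← hn']; exact hmn
        exact IsCoprime.of_mul_right_right h1
      obtain ⟨A, hA⟩ := Int.sq_of_gcd_eq_one hcopmn' hprod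
      have hA : m = A ^ 2 := by
        rcases hA with hA | hA
        · exact hA
        · exfalso; linarith [sq_nonneg A]
      obtain ⟨B, hB⟩ := Int.sq_of_gcd_eq_one (by rwa [Int.gcd_comm])
        (by rwa [mul_comm] at hprod)
      have hB : n' = B ^ 2 := by
        rcases hB with hB | hB
        · exact hB
        · exfalso; have : 0 < n' := by omega
          linarith [sq_nonneg B]
      have hA0 : A ≠ 0 := by intro h0; rw [h0] at hA; simp at hA; omega
      have hB0 : B ≠ 0 := by intro h0; rw [h0] at hB; simp at hB; omega
      have hAodd : A % 2 = 1 := by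
        rcases sq_mod4 A with ⟨h1, h2⟩ | ⟨h1, h2⟩
        · exfalso; rw [← hA] at h1; omega
        · exact h2
      have heq2 : x ^ 2 = 4 * B ^ 4 + A ^ 4 := by
        have h5 : x ^ 2 = m ^ 2 + nn ^ 2 := e3
        rw [h5, hn', hA, hB]; ring
      have hcopxA : IsCoprime x A := by
        have h1 : IsCoprime (A ^ 2) x := by rw [← hA]; exact hxm
        exact ((IsCoprime.pow_left_iff (by norm_num : (0:ℕ) < 2)).mp h1).symm
      exact aux2 hx hB0 hA0 hxodd hAodd hcopxA heq2 IH'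
  · -- Case A : y odd
    have hy2odd : y ^ 2 % 2 = 1 := by omega
    have ht : PythagoreanTriple (y ^ 2) z (x ^ 2) := by
      unfold PythagoreanTriple
      linear_combination -h
    have hgcd : Int.gcd (y ^ 2) z = 1 := Int.isCoprime_iff_gcd_eq_one.mp hyz
    obtain ⟨m, nn, e1, e2, e3, e4, e5, e6⟩ :=
      ht.coprime_classification' hgcd hy2odd (by positivity)
    have hmpos : 0 < m := by
      rcases lt_or_eq_of_le e6 with h1 | h1
      · exact h1
      · exfalso
        rw [← h1] at e1
        nlinarith [e1, sq_nonneg nn, mul_pos hy hy]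
    have hn0 : nn ≠ 0 := by
      intro h0
      rw [h0] at e2
      simp at e2
      omega
    have hmx : m < x := by nlinarith [e3, sq_pos_of_ne_zero hn0]
    have hmeas : m.natAbs < x.natAbs :=
      Int.natAbs_lt_natAbs_of_nonneg_of_lt e6 hmx
    have hnew : m ^ 4 = nn ^ 4 + (x * y) ^ 2 := by
      linear_combination (-(m ^ 2) - nn ^ 2) * e1 + (-(y ^ 2)) * e3
    exact IH' m nn (x * y) hmeas (ne_of_gt hmpos) hn0
      (mul_ne_zero (ne_of_gt hx) (ne_of_gt hy)) e4 hnew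

theorem ibn_khawwam_problem1 :
    ¬ ∃ x y u v : ℤ, 0 < x ∧ 0 < y ∧ 0 < u ∧ 0 < v ∧
      x ^ 2 + y ^ 2 = u ^ 2 ∧ x ^ 2 - y ^ 2 = v ^ 2 := by
  rintro ⟨x, y, u, v, hx, hy, hu, hv, h1, h2⟩
  have hmain : x ^ 4 = y ^ 4 + (u * v) ^ 2 := by
    linear_combination (x ^ 2 - y ^ 2) * h1 + u ^ 2 * h2
  set g : ℤ := (Int.gcd x y : ℤ) with hg
  have hgpos : 0 < g := by
    rw [hg]
    exact_mod_cast Int.gcd_pos_of_ne_zero_left y (ne_of_gt hx)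
  have hgx : g ∣ x := Int.gcd_dvd_left x y
  have hgy : g ∣ y := Int.gcd_dvd_right x y
  obtain ⟨x', hx'⟩ := hgx
  obtain ⟨y', hy'⟩ := hgy
  have hg4 : g ^ 4 ∣ (u * v) ^ 2 := by
    have h0 : (u * v) ^ 2 = x ^ 4 - y ^ 4 := by linarith [hmain]
    rw [h0, hx', hy']
    exact ⟨x' ^ 4 - y' ^ 4, by ring⟩
  have hg2 : g ^ 2 ∣ u * v := by
    have h0 : (g ^ 2) ^ 2 ∣ (u * v) ^ 2 := by
      have h44 : (g ^ 2) ^ 2 = g ^ 4 := by ring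
      rw [h44]; exact hg4
    exact (Int.pow_dvd_pow_iff two_ne_zero).mp h0
  obtain ⟨z', hz'⟩ := hg2
  have hx'0 : x' ≠ 0 := by
    intro h0; rw [h0, mul_zero] at hx'; omega
  have hy'0 : y' ≠ 0 := by
    intro h0; rw [h0, mul_zero] at hy'; omega
  have hz'0 : z' ≠ 0 := by
    intro h0
    rw [h0, mul_zero] at hz'
    exact (mul_ne_zero (ne_of_gt hu) (ne_of_gt hv)) hz'
  have hcop : Int.gcd x' y' = 1 := by
    have h0 := Int.gcd_div_gcd_div_gcd (i := x) (j := y)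
      (Int.gcd_pos_of_ne_zero_left y (ne_of_gt hx))
    rw [← hg] at h0
    have hx'' : x / g = x' := by rw [hx']; exact Int.mul_ediv_cancel_left x' (ne_of_gt hgpos)
    have hy'' : y / g = y' := by rw [hy']; exact Int.mul_ediv_cancel_left y' (ne_of_gt hgpos)
    rwa [hx'', hy''] at h0
  have heq : x' ^ 4 = y' ^ 4 + z' ^ 2 := by
    have hg40 : (g : ℤ) ^ 4 ≠ 0 := by positivity
    apply mul_left_cancel₀ hg40
    have h0 : (g * x') ^ 4 = (g * y') ^ 4 + (g ^ 2 * z') ^ 2 := by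
      rw [← hx', ← hy', ← hz']; exact hmain
    linear_combination h0
  exact no_descent x'.natAbs x' y' z' rfl hx'0 hy'0 hz'0 hcop heq
end

section
/- There do not exist positive integers x, y, z such that x⁴ − y⁴ = z². -/
/-- Extract a positive square root from a coprime factorization of a square. -/
private lemma sq_pos_of_coprime {a b c : ℤ} (h : IsCoprime a b) (heq : a * b = c ^ 2)
    (ha : 0 < a) : ∃ r : ℤ, 0 < r ∧ a = r ^ 2 := by
  obtain ⟨r, hr | hr⟩ := Int.sq_of_isCoprime h heq
  · have hr0 : r ≠ 0 := by rintro rfl; simp at hr; omega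
    exact ⟨|r|, abs_pos.mpr hr0, by rw [sq_abs]; exact hr⟩
  · exfalso; nlinarith [sq_nonneg r]

/-- Key step: a solution to `x ^ 2 = a ^ 4 + 4 * b ^ 4` yields a smaller solution of
`c ^ 4 - d ^ 4 = w ^ 2`. -/
private lemma odd_of_odd_sq {a : ℤ} (h : Odd (a ^ 2)) : a % 2 = 1 := by
  rcases Int.even_or_odd a with he | ho
  · exact ((Int.not_odd_iff_even.mpr (Int.even_pow.mpr ⟨he, two_ne_zero⟩)) h).elim
  · exact Int.odd_iff.mp ho

private lemma descend_aux (a b x : ℤ) (ha : 0 < a) (hb : 0 < b) (hx : 0 < x)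
    (haodd : a % 2 = 1) (hco : IsCoprime a b) (heq : x ^ 2 = a ^ 4 + 4 * b ^ 4) :
    ∃ c d w : ℤ, 0 < c ∧ 0 < d ∧ 0 < w ∧ c ^ 4 - d ^ 4 = w ^ 2 ∧ c < x := by
  have hPT : PythagoreanTriple (a ^ 2) (2 * b ^ 2) x := by
    unfold PythagoreanTriple; linear_combination -heq
  have hco2 : IsCoprime (a ^ 2) (2 * b ^ 2) := by
    have hnd : ¬ (2:ℤ) ∣ a := by omega
    have h2 : IsCoprime a 2 := ((Int.prime_two.coprime_iff_not_dvd).mpr hnd).symm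
    exact (h2.mul_right hco.pow_right).pow_left
  have ha2odd : a ^ 2 % 2 = 1 := Int.odd_iff.mp ((Int.odd_iff.mpr haodd).pow)
  obtain ⟨p, q, h1, h2, h3, hcopq, hpar, hp0⟩ :=
    hPT.coprime_classification' (Int.isCoprime_iff_gcd_eq_one.mp hco2) ha2odd hx
  have hpq : p * q = b ^ 2 := by linarith
  have hq : 0 < q := by nlinarith
  have hp : 0 < p := by nlinarith
  obtain ⟨c, hc, hcp⟩ := sq_pos_of_coprime (Int.isCoprime_iff_gcd_eq_one.mpr hcopq) hpq hp
  obtain ⟨d, hd, hdq⟩ := sq_pos_of_coprime (Int.isCoprime_iff_gcd_eq_one.mpr hcopq).symm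
    (by linarith [hpq] : q * p = b ^ 2) hq
  refine ⟨c, d, a, hc, hd, ha, by rw [h1, hcp, hdq]; ring, ?_⟩
  nlinarith [h3, hcp, hdq]

private lemma no_sol : ∀ n : ℕ, ∀ x y z : ℤ, x.natAbs = n → 0 < x → 0 < y → 0 < z →
    x ^ 4 - y ^ 4 ≠ z ^ 2 := by
  intro n
  induction n using Nat.strong_induction_on with
  | _ n IH =>
    intro x y z hxn hx hy hz heq
    rcases eq_or_ne (Int.gcd x y) 1 with hg | hg
    · -- coprime case
      have hco : IsCoprime x y := Int.isCoprime_iff_gcd_eq_one.mpr hg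
      have hyz2 : IsCoprime y (z ^ 2) := by
        have h := (hco.symm.pow_right (n := 4)).add_mul_left_right (-(y ^ 3))
        rwa [show x ^ 4 + y * -y ^ 3 = z ^ 2 by linear_combination heq] at h
      have hyz : IsCoprime y z := hyz2.of_isCoprime_of_dvd_right (dvd_pow_self z two_ne_zero)
      rcases Int.even_or_odd y with hyeven | hyodd
      · -- y even
        have hxodd : x % 2 = 1 := by
          rcases Int.even_or_odd x with hxe | hxo
          · exfalso
            obtain ⟨r, hr⟩ := hxe
            obtain ⟨s, hs⟩ := hyeven
            have h2 : IsUnit (2 : ℤ) :=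
              hco.isUnit_of_dvd' ⟨r, by omega⟩ ⟨s, by omega⟩
            rw [Int.isUnit_iff] at h2
            omega
          · exact Int.odd_iff.mp hxo
        have hzodd : z % 2 = 1 := by
          apply odd_of_odd_sq
          rw [← heq]
          exact ((Int.odd_iff.mpr hxodd).pow).sub_even (hyeven.pow_of_ne_zero (by norm_num))
        have hPT : PythagoreanTriple z (y ^ 2) (x ^ 2) := by
          unfold PythagoreanTriple; linear_combination -heq
        obtain ⟨m, n', h1, h2, h3, hcomn, hpar, hm0⟩ :=
          hPT.coprime_classification'
            (Int.isCoprime_iff_gcd_eq_one.mp (hyz.symm.pow_right)) hzodd (by positivity)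
        obtain ⟨y1, hy1⟩ := hyeven
        have hmn : m * n' = 2 * y1 ^ 2 := by nlinarith [h2]
        have hn' : 0 < n' := by nlinarith [sq_nonneg y, h2]
        have hm : 0 < m := by nlinarith
        have hy1p : 0 < y1 := by omega
        have hcomn' : IsCoprime m n' := Int.isCoprime_iff_gcd_eq_one.mpr hcomn
        rcases hpar with ⟨hme, hno⟩ | ⟨hmo, hne⟩
        · -- m even, n' odd
          obtain ⟨m1, hm1⟩ : (2:ℤ) ∣ m := Int.dvd_of_emod_eq_zero hme
          have hm1p : 0 < m1 := by omega
          have hm1n : m1 * n' = y1 ^ 2 := by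
            have h2 : 2 * (m1 * n') = 2 * y1 ^ 2 := by linear_combination hmn - n' * hm1
            linarith
          have hcom1 : IsCoprime m1 n' :=
            hcomn'.of_isCoprime_of_dvd_left ⟨2, by omega⟩
          obtain ⟨a, hap, ham⟩ := sq_pos_of_coprime hcom1 hm1n hm1p
          obtain ⟨b, hbp, hbn⟩ := sq_pos_of_coprime hcom1.symm
            (by linarith : n' * m1 = y1 ^ 2) hn'
          have hbodd : b % 2 = 1 := odd_of_odd_sq (hbn ▸ Int.odd_iff.mpr hno)
          have hcoba : IsCoprime b a := by
            have h := hcom1.symm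
            rw [ham, hbn] at h
            exact (h.of_isCoprime_of_dvd_left (dvd_pow_self b two_ne_zero)).of_isCoprime_of_dvd_right
              (dvd_pow_self a two_ne_zero)
          have hx2 : x ^ 2 = b ^ 4 + 4 * a ^ 4 := by
            rw [h3, hm1, ham, hbn]; ring
          obtain ⟨c, d, w, hc, hd, hw, heq2, hlt⟩ := descend_aux b a x hbp hap hx hbodd hcoba hx2
          exact IH c.natAbs (by omega) c d w rfl hc hd hw heq2
        · -- m odd, n' even
          obtain ⟨n1, hn1⟩ : (2:ℤ) ∣ n' := Int.dvd_of_emod_eq_zero hne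
          have hn1p : 0 < n1 := by omega
          have hn1m : m * n1 = y1 ^ 2 := by
            have h2 : 2 * (m * n1) = 2 * y1 ^ 2 := by linear_combination hmn - m * hn1
            linarith
          have hcon1 : IsCoprime m n1 :=
            hcomn'.of_isCoprime_of_dvd_right ⟨2, by omega⟩
          obtain ⟨a, hap, ham⟩ := sq_pos_of_coprime hcon1 hn1m hm
          obtain ⟨b, hbp, hbn⟩ := sq_pos_of_coprime hcon1.symm
            (by linarith : n1 * m = y1 ^ 2) hn1p
          have haodd : a % 2 = 1 := odd_of_odd_sq (ham ▸ Int.odd_iff.mpr hmo)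
          have hcoab : IsCoprime a b := by
            have h := hcon1
            rw [ham, hbn] at h
            exact (h.of_isCoprime_of_dvd_left (dvd_pow_self a two_ne_zero)).of_isCoprime_of_dvd_right
              (dvd_pow_self b two_ne_zero)
          have hx2 : x ^ 2 = a ^ 4 + 4 * b ^ 4 := by
            rw [h3, hn1, ham, hbn]; ring
          obtain ⟨c, d, w, hc, hd, hw, heq2, hlt⟩ := descend_aux a b x hap hbp hx haodd hcoab hx2
          exact IH c.natAbs (by omega) c d w rfl hc hd hw heq2
      · -- y odd
        have hPT : PythagoreanTriple (y ^ 2) z (x ^ 2) := by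
          unfold PythagoreanTriple; linear_combination -heq
        have hy2odd : y ^ 2 % 2 = 1 := Int.odd_iff.mp (hyodd.pow)
        obtain ⟨m, n', h1, h2, h3, hcomn, hpar, hm0⟩ :=
          hPT.coprime_classification'
            (Int.isCoprime_iff_gcd_eq_one.mp (hyz.pow_left)) hy2odd (by positivity)
        have hn'0 : n' ≠ 0 := by rintro rfl; simp at h2; omega
        have hm0' : m ≠ 0 := by rintro rfl; simp at h2; omega
        have hmpos : 0 < m := lt_of_le_of_ne hm0 (Ne.symm hm0')
        have heq2 : m ^ 4 - |n'| ^ 4 = (x * y) ^ 2 := by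
          have habs : |n'| ^ 4 = n' ^ 4 := by
            rw [← abs_pow, abs_of_nonneg (by positivity)]
          rw [habs]
          calc m ^ 4 - n' ^ 4 = (m ^ 2 + n' ^ 2) * (m ^ 2 - n' ^ 2) := by ring
            _ = x ^ 2 * y ^ 2 := by rw [← h3, ← h1]
            _ = (x * y) ^ 2 := by ring
        have hmx : m < x := by nlinarith [sq_abs n', abs_pos.mpr hn'0, h3]
        exact IH m.natAbs (by omega) m |n'| (x * y) rfl hmpos (abs_pos.mpr hn'0)
          (by positivity) heq2
    · -- gcd > 1 : divide out
      have hgpos : 0 < Int.gcd x y := Int.gcd_pos_of_ne_zero_left y hx.ne'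
      set g : ℤ := (Int.gcd x y : ℤ) with hgdef
      have hgpos' : (1:ℤ) < g := by
        simp only [hgdef]
        exact_mod_cast Nat.lt_of_le_of_ne hgpos (Ne.symm hg)
      obtain ⟨x', hx'⟩ : g ∣ x := Int.gcd_dvd_left x y
      obtain ⟨y', hy'⟩ : g ∣ y := Int.gcd_dvd_right x y
      have hzdvd : (g ^ 2) ^ 2 ∣ z ^ 2 := ⟨x' ^ 4 - y' ^ 4, by rw [← heq, hx', hy']; ring⟩
      have hzd : g ^ 2 ∣ z := by
        rwa [Int.pow_dvd_pow_iff two_ne_zero] at hzdvd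
      obtain ⟨z', hz'⟩ := hzd
      have hg0 : g ≠ 0 := by positivity
      rw [hx', hy', hz'] at heq
      have heq' : x' ^ 4 - y' ^ 4 = z' ^ 2 := by
        apply mul_left_cancel₀ (pow_ne_zero 4 hg0)
        linear_combination heq
      have hx'p : 0 < x' := by nlinarith [hx' ▸ hx]
      have hy'p : 0 < y' := by nlinarith [hy' ▸ hy]
      have hz'p : 0 < z' := by nlinarith [hz' ▸ hz, sq_nonneg g]
      have hlt : x' < x := by nlinarith [hx' ▸ hx]
      exact IH x'.natAbs (by omega) x' y' z' rfl hx'p hy'p hz'p heq'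

theorem no_x4_sub_y4_eq_z2 :
    ¬ ∃ x y z : ℤ, 0 < x ∧ 0 < y ∧ 0 < z ∧ x ^ 4 - y ^ 4 = z ^ 2 := by
  rintro ⟨x, y, z, hx, hy, hz, heq⟩
  exact no_sol x.natAbs x y z rfl hx hy hz heq
end

section
/- There do not exist positive rational numbers x and y such that x²·(x² + y²) = y⁴. -/
theorem ibn_khawwam_problem9 :
    ¬ ∃ x y : ℚ, 0 < x ∧ 0 < y ∧ x ^ 2 * (x ^ 2 + y ^ 2) = y ^ 4 := by
  rintro ⟨x, y, hx, hy, h⟩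
  have hx2 : x ^ 2 ≠ 0 := pow_ne_zero _ hx.ne'
  set q : ℚ := (2 * y ^ 2 - x ^ 2) / x ^ 2 with hq
  have hq5 : q ^ 2 = 5 := by
    rw [hq]
    field_simp [hq]
    nlinarith [h]
  have h5 : Irrational (Real.sqrt 5) := by
    simpa using Nat.Prime.irrational_sqrt (by norm_num : Nat.Prime 5)
  apply h5
  refine ⟨|q|, ?_⟩
  have : ((|q| : ℚ) : ℝ) = Real.sqrt 5 := by
    push_cast
    rw [show ((5 : ℝ)) = ((q : ℝ)) ^ 2 by exact_mod_cast hq5.symm]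
    rw [Real.sqrt_sq_eq_abs]
  simpa using this
end

section
/- There do not exist positive integers x, y, a such that x⁶ + y⁶ = a²·x³·y³. -/
lemma ibn_aux : ∀ x : ℕ, ∀ y a : ℕ, 0 < x → 0 < y → 0 < a →
    x ^ 6 + y ^ 6 = a ^ 2 * x ^ 3 * y ^ 3 → False := by
  intro x
  induction x using Nat.strong_induction_on with
  | _ x ih =>
    intro y a hx hy ha heq
    rcases eq_or_lt_of_le (show 1 ≤ x from hx) with h1 | h2
    · -- x = 1
      have hx1 : x = 1 := h1.symm
      subst hx1
      simp only [one_pow] at heq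
      have hdvd : y ^ 3 ∣ 1 := by
        have h1 : y ^ 3 ∣ y ^ 6 := pow_dvd_pow y (by norm_num)
        have h2 : y ^ 3 ∣ a ^ 2 * 1 * y ^ 3 := ⟨a ^ 2 * 1, by ring⟩
        have := (Nat.dvd_sub h2 h1)
        have hsub : a ^ 2 * 1 * y ^ 3 - y ^ 6 = 1 := by omega
        rwa [hsub] at this
      have hy1 : y = 1 := by
        have h3 := Nat.dvd_one.mp hdvd
        have := pow_eq_one_iff |>.mp h3
        omega
      subst hy1
      simp at heq
      -- 2 = a ^ 2
      rcases Nat.lt_or_ge a 2 with h | h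
      · interval_cases a <;> omega
      · nlinarith
    · -- x ≥ 2 : pick a prime factor p of x
      obtain ⟨p, hp, hpx⟩ := Nat.exists_prime_and_dvd (by omega : x ≠ 1)
      have hpy : p ∣ y := by
        have h1 : x ^ 3 ∣ y ^ 6 := by
          have hx3 : x ^ 3 ∣ x ^ 6 := pow_dvd_pow x (by norm_num)
          have hx3' : x ^ 3 ∣ a ^ 2 * x ^ 3 * y ^ 3 :=
            ⟨a ^ 2 * y ^ 3, by ring⟩
          have := Nat.dvd_sub hx3' hx3
          have hsub : a ^ 2 * x ^ 3 * y ^ 3 - x ^ 6 = y ^ 6 := by omega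
          rwa [hsub] at this
        have h2 : p ∣ y ^ 6 := dvd_trans (dvd_trans (dvd_pow hpx (by norm_num)) h1) (dvd_refl _)
        exact hp.dvd_of_dvd_pow h2
      obtain ⟨x', rfl⟩ := hpx
      obtain ⟨y', rfl⟩ := hpy
      have hp2 : 2 ≤ p := hp.two_le
      have hx' : 0 < x' := by
        rcases Nat.eq_zero_or_pos x' with h | h
        · subst h; simp at hx
        · exact h
      have hy' : 0 < y' := by
        rcases Nat.eq_zero_or_pos y' with h | h
        · subst h; simp at hy
        · exact h
      have heq' : x' ^ 6 + y' ^ 6 = a ^ 2 * x' ^ 3 * y' ^ 3 := by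
        have hp6 : 0 < p ^ 6 := by positivity
        have : p ^ 6 * (x' ^ 6 + y' ^ 6) = p ^ 6 * (a ^ 2 * x' ^ 3 * y' ^ 3) := by
          ring_nf
          ring_nf at heq
          linarith
        exact Nat.eq_of_mul_eq_mul_left hp6 this
      exact ih x' (by nlinarith) y' a hx' hy' ha heq'

theorem ibn_khawwam_problem13 :
    ¬ ∃ x y a : ℕ, 0 < x ∧ 0 < y ∧ 0 < a ∧
      x ^ 6 + y ^ 6 = a ^ 2 * x ^ 3 * y ^ 3 := by
  rintro ⟨x, y, a, hx, hy, ha, heq⟩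
  exact ibn_aux x y a hx hy ha heq
end

section
/- The only natural number solutions (x, y) of x⁶ − x³ = y² are (0, 0) and (1, 0). -/
theorem ibn_khawwam_problem23 (x y : ℕ) :
    x ^ 6 - x ^ 3 = y ^ 2 ↔ (x = 0 ∧ y = 0) ∨ (x = 1 ∧ y = 0) := by
  constructor
  · intro h
    rcases Nat.eq_zero_or_pos x with hx | hx
    · subst hx
      simp at h
      exact Or.inl ⟨rfl, by nlinarith [sq_nonneg y]⟩
    · set a := x ^ 3 with ha
      have ha1 : 1 ≤ a := Nat.one_le_iff_ne_zero.mpr (pow_ne_zero _ (by omega))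
      have hfac : a * (a - 1) = y ^ 2 := by
        rw [Nat.mul_sub, mul_one, ← h, ha]; ring_nf
      have hcop : Nat.Coprime a (a - 1) := by
        have hb : a - 1 + 1 = a := Nat.succ_pred_eq_of_pos ha1
        rw [← hb]
        simp only [Nat.add_sub_cancel, Nat.coprime_self_add_left]
        exact Nat.coprime_one_left _
      have hu : IsUnit (gcd a (a - 1)) := by
        rw [Nat.isUnit_iff]
        exact hcop
      obtain ⟨d, hd⟩ := exists_eq_pow_of_mul_eq_pow hu hfac
      have hu' : IsUnit (gcd (a - 1) a) := by
        rw [Nat.isUnit_iff]; exact hcop.symm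
      obtain ⟨e, he⟩ := exists_eq_pow_of_mul_eq_pow hu' (by rw [mul_comm]; exact hfac)
      have hde : d ^ 2 = e ^ 2 + 1 := by omega
      have he0 : e = 0 := by
        by_contra h0
        have h1 : 1 ≤ e := Nat.one_le_iff_ne_zero.mpr h0
        have hlt : e < d := by nlinarith
        have h2 : (e + 1) ^ 2 ≤ d ^ 2 := Nat.pow_le_pow_left hlt 2
        nlinarith
      subst he0
      simp at he
      have hx3 : x ^ 3 = 1 := by omega
      have hx1 : x = 1 := by
        exact (pow_eq_one_iff.mp hx3).resolve_right (by norm_num)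
      refine Or.inr ⟨hx1, ?_⟩
      subst hx1
      simp at h
      nlinarith [sq_nonneg y]
  · rintro (⟨rfl, rfl⟩ | ⟨rfl, rfl⟩) <;> norm_num
end

section
/- There do not exist nonzero rational numbers x and y with x + y = 10 and x/y + y/x = x. -/
theorem ibn_khawwam_problem32 :
    ¬ ∃ x y : ℚ, x ≠ 0 ∧ y ≠ 0 ∧ x + y = 10 ∧ x / y + y / x = x := by
  rintro ⟨x, y, hx, hy, hsum, heq⟩
  have hy' : y = 10 - x := by linarith
  subst hy'
  have hcubic : x ^ 3 - 8 * x ^ 2 - 20 * x + 100 = 0 := by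
    field_simp at heq
    nlinarith [heq]
  set n := x.num with hn
  set d := (x.den : ℤ) with hd
  have hdq : (d : ℚ) ≠ 0 := by
    rw [hd]; push_cast; exact_mod_cast Nat.cast_ne_zero.mpr x.den_nz
  have hxnd : (n : ℚ) = x * (d : ℚ) := by
    have h := Rat.num_div_den x
    rw [hn, hd]
    push_cast
    field_simp at h ⊢
    exact h
  have hkey : n ^ 3 - 8 * n ^ 2 * d - 20 * n * d ^ 2 + 100 * d ^ 3 = 0 := by
    have : ((n : ℚ)) ^ 3 - 8 * (n:ℚ) ^ 2 * d - 20 * n * d ^ 2 + 100 * d ^ 3 = 0 := by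
      rw [hxnd]
      have h2 : (x ^ 3 - 8 * x ^ 2 - 20 * x + 100) * (d:ℚ)^3 = 0 := by rw [hcubic]; ring
      linear_combination h2
    exact_mod_cast this
  have hdvd : d ∣ n ^ 3 := ⟨8 * n ^ 2 + 20 * n * d - 100 * d ^ 2, by linarith [hkey]⟩
  have hcopn : Nat.Coprime x.den n.natAbs := (x.reduced).symm
  have hdvdn : x.den ∣ n.natAbs ^ 3 := by
    have := Int.natAbs_dvd_natAbs.mpr hdvd
    simpa [hd, Int.natAbs_pow] using this
  have hd1 : d = 1 := by
    have := Nat.Coprime.eq_one_of_dvd (hcopn.pow_right 3) hdvdn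
    rw [hd, this]; norm_num
  rw [hd1] at hkey
  have h100 : n ∣ 100 := ⟨-(n ^ 2 - 8 * n - 20), by linarith [hkey]⟩
  have hb : n ≤ 100 ∧ -100 ≤ n := by
    have h1 : n.natAbs ∣ 100 := by
      have := Int.natAbs_dvd_natAbs.mpr h100
      simpa using this
    have := Nat.le_of_dvd (by norm_num) h1
    omega
  obtain ⟨hb1, hb2⟩ := hb
  interval_cases n <;> norm_num at hkey
end
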